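/- Robustness of the mediation estimating functional under submodel M_c (correct mediator density and correct exposure model, arbitrary outcome regression): if f̂_M(m|e,x) = P(M=m|E=e,X=x) and f̂_E(x) = P(E=1|X=x) for all m ∈ 𝒮, e ∈ {0,1} and x with P(X=x) > 0, then for every function b̂ : 𝒮×𝒳 → ℝ, T(b̂, f̂_M, f̂_E) = θ0. -/

import Mathlib

open MeasureTheory ProbabilityTheory

/-- Conditional probability of `B` given the event `A`: `P(B ∩ A) / P(A)`. -/
noncomputable def cP {Ω : Type*} [MeasurableSpace Ω] (μ : Measure Ω) (B A : Set Ω) : ℝ :=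
  (μ (B ∩ A)).toReal / (μ A).toReal

/-- Conditional expectation of `Y` given the event `A`: `E[Y·1_A] / P(A)`. -/
noncomputable def cE {Ω : Type*} [MeasurableSpace Ω] (μ : Measure Ω) (Y : Ω → ℝ) (A : Set Ω) : ℝ :=
  (∫ ω in A, Y ω ∂μ) / (μ A).toReal

open Classical in
/-- The mediation functional
`θ0 = Σ_{m, x : P(X=x)>0} E(Y | E=1, M=m, X=x) · P(M=m | E=0, X=x) · P(X=x)`. -/
noncomputable def theta0 {Ω 𝒳 𝒮 : Type*} [MeasurableSpace Ω] [Fintype 𝒳] [Fintype 𝒮]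
    (μ : Measure Ω) (X : Ω → 𝒳) (M : Ω → 𝒮) (E : Ω → Bool) (Y : Ω → ℝ) : ℝ :=
  ∑ m : 𝒮, ∑ x ∈ Finset.univ.filter (fun x => μ (X ⁻¹' {x}) ≠ 0),
    cE μ Y (E ⁻¹' {true} ∩ M ⁻¹' {m} ∩ X ⁻¹' {x}) *
      cP μ (M ⁻¹' {m}) (E ⁻¹' {false} ∩ X ⁻¹' {x}) *
      (μ (X ⁻¹' {x})).toReal

/-- robustness of the mediation estimating functional under submodel
M_c: if the mediator density and the exposure model are correct, then for every
outcome-regression working model, `T(b̂, f̂_M, f̂_E) = θ0`. -/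
theorem robust_Mc
    {Ω 𝒳 𝒮 : Type*} [MeasurableSpace Ω] [Fintype 𝒳] [Fintype 𝒮]
    [MeasurableSpace 𝒳] [MeasurableSingletonClass 𝒳]
    [MeasurableSpace 𝒮] [MeasurableSingletonClass 𝒮]
    (μ : Measure Ω) [IsProbabilityMeasure μ]
    (X : Ω → 𝒳) (M : Ω → 𝒮) (E : Ω → Bool) (Y : Ω → ℝ)
    (hX : Measurable X) (hM : Measurable M) (hE : Measurable E)
    (hY : Integrable Y μ)
    (hposE : ∀ (e : Bool) (x : 𝒳), μ (X ⁻¹' {x}) ≠ 0 → μ (E ⁻¹' {e} ∩ X ⁻¹' {x}) ≠ 0)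
    (hposM : ∀ (m : 𝒮) (e : Bool) (x : 𝒳), μ (X ⁻¹' {x}) ≠ 0 →
      μ (M ⁻¹' {m} ∩ E ⁻¹' {e} ∩ X ⁻¹' {x}) ≠ 0)
    -- working models
    (bhat : 𝒮 → 𝒳 → ℝ) (fMhat : 𝒮 → Bool → 𝒳 → ℝ) (fEhat : 𝒳 → ℝ)
    (hfM01 : ∀ m e x, fMhat m e x ∈ Set.Ioo (0:ℝ) 1)
    (hfMsum : ∀ (e : Bool) (x : 𝒳), ∑ m : 𝒮, fMhat m e x = 1)
    (hfE01 : ∀ x, fEhat x ∈ Set.Ioo (0:ℝ) 1)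
    (etahat : 𝒳 → ℝ)
    (hetahat : ∀ x, etahat x = ∑ m : 𝒮, bhat m x * fMhat m false x)
    -- submodel M_c: correct mediator density and correct exposure model
    (hfM : ∀ (m : 𝒮) (e : Bool) (x : 𝒳), μ (X ⁻¹' {x}) ≠ 0 →
      fMhat m e x = cP μ (M ⁻¹' {m}) (E ⁻¹' {e} ∩ X ⁻¹' {x}))
    (hfE : ∀ x : 𝒳, μ (X ⁻¹' {x}) ≠ 0 → fEhat x = cP μ (E ⁻¹' {true}) (X ⁻¹' {x})) :
    ∫ ω,
        ((if E ω then (1:ℝ) else 0) * fMhat (M ω) false (X ω) * (Y ω - bhat (M ω) (X ω)) /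
            (fEhat (X ω) * fMhat (M ω) true (X ω)) +
          (if E ω then (0:ℝ) else 1) / (1 - fEhat (X ω)) *
            (bhat (M ω) (X ω) - etahat (X ω)) +
          etahat (X ω)) ∂μ = theta0 μ X M E Y := by
  classical
  set A : Bool → 𝒮 → 𝒳 → Set Ω := fun e m x => E ⁻¹' {e} ∩ M ⁻¹' {m} ∩ X ⁻¹' {x} with hA
  have hAmeas : ∀ e m x, MeasurableSet (A e m x) := fun e m x =>
    ((hE (measurableSet_singleton e)).inter (hM (measurableSet_singleton m))).inter
      (hX (measurableSet_singleton x))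
  set c : Bool → 𝒮 → 𝒳 → ℝ := fun e m x =>
    if e then fMhat m false x / (fEhat x * fMhat m true x) else 0 with hc
  set d : Bool → 𝒮 → 𝒳 → ℝ := fun e m x =>
    if e then etahat x - fMhat m false x / (fEhat x * fMhat m true x) * bhat m x
    else (bhat m x - etahat x) / (1 - fEhat x) + etahat x with hd
  -- pointwise identity
  have hpt : ∀ ω : Ω,
      ((if E ω then (1:ℝ) else 0) * fMhat (M ω) false (X ω) * (Y ω - bhat (M ω) (X ω)) /
            (fEhat (X ω) * fMhat (M ω) true (X ω)) +
          (if E ω then (0:ℝ) else 1) / (1 - fEhat (X ω)) *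
            (bhat (M ω) (X ω) - etahat (X ω)) +
          etahat (X ω)) =
      ∑ x : 𝒳, ∑ m : 𝒮, ∑ e : Bool,
        (A e m x).indicator (fun ω' => c e m x * Y ω' + d e m x) ω := by
    intro ω
    have h1 : (∑ x : 𝒳, ∑ m : 𝒮, ∑ e : Bool,
        (A e m x).indicator (fun ω' => c e m x * Y ω' + d e m x) ω)
        = ∑ x : 𝒳, ∑ m : 𝒮, ∑ e : Bool,
          (if X ω = x then if M ω = m then if E ω = e then c e m x * Y ω + d e m x else 0
            else 0 else 0) := by
      refine Finset.sum_congr rfl fun x _ => Finset.sum_congr rfl fun m _ =>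
        Finset.sum_congr rfl fun e _ => ?_
      by_cases h1 : X ω = x <;> by_cases h2 : M ω = m <;> by_cases h3 : E ω = e <;>
        simp only [Set.indicator_apply, hA, Set.mem_inter_iff, Set.mem_preimage,
          Set.mem_singleton_iff, h1, h2, h3] <;> simp [h1, h2, h3]
    rw [h1, Finset.sum_eq_single (X ω)
        (fun b _ hb => Finset.sum_eq_zero fun m _ => Finset.sum_eq_zero fun e _ =>
          if_neg fun h => hb h.symm)
        (fun h => absurd (Finset.mem_univ _) h),
      Finset.sum_eq_single (M ω)
        (fun b _ hb => Finset.sum_eq_zero fun e _ => by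
          rw [if_pos rfl]; exact if_neg fun h => hb h.symm)
        (fun h => absurd (Finset.mem_univ _) h),
      Finset.sum_eq_single (E ω)
        (fun b _ hb => by rw [if_pos rfl, if_pos rfl]; exact if_neg fun h => hb h.symm)
        (fun h => absurd (Finset.mem_univ _) h),
      if_pos rfl, if_pos rfl, if_pos rfl]
    cases hEω : E ω <;> simp [hc, hd, hEω] <;> ring
  have hInt : ∀ (e : Bool) (m : 𝒮) (x : 𝒳),
      Integrable ((A e m x).indicator fun ω => c e m x * Y ω + d e m x) μ :=
    fun e m x => ((hY.const_mul _).add (integrable_const _)).indicator (hAmeas e m x)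
  have hIeq : (∫ ω,
        ((if E ω then (1:ℝ) else 0) * fMhat (M ω) false (X ω) * (Y ω - bhat (M ω) (X ω)) /
            (fEhat (X ω) * fMhat (M ω) true (X ω)) +
          (if E ω then (0:ℝ) else 1) / (1 - fEhat (X ω)) *
            (bhat (M ω) (X ω) - etahat (X ω)) +
          etahat (X ω)) ∂μ)
      = ∑ x : 𝒳, ∑ m : 𝒮, ∑ e : Bool,
          (c e m x * ∫ ω in A e m x, Y ω ∂μ + d e m x * (μ (A e m x)).toReal) := by
    rw [integral_congr_ae (Filter.Eventually.of_forall hpt)]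
    rw [integral_finset_sum _ (fun x _ => integrable_finset_sum _ (fun m _ =>
      integrable_finset_sum _ (fun e _ => hInt e m x)))]
    refine Finset.sum_congr rfl fun x _ => ?_
    rw [integral_finset_sum _ (fun m _ => integrable_finset_sum _ (fun e _ => hInt e m x))]
    refine Finset.sum_congr rfl fun m _ => ?_
    rw [integral_finset_sum _ (fun e _ => hInt e m x)]
    refine Finset.sum_congr rfl fun e _ => ?_
    rw [integral_indicator (hAmeas e m x),
      integral_add (hY.integrableOn.const_mul _)
        (integrableOn_const (measure_ne_top μ _)),
      integral_const_mul, setIntegral_const, smul_eq_mul, mul_comm (μ.real (A e m x)), Measure.real]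
  rw [hIeq, theta0]
  conv_rhs => rw [Finset.sum_comm]
  rw [← Finset.sum_filter_add_sum_filter_not Finset.univ (fun x => μ (X ⁻¹' {x}) ≠ 0)
    (fun x => ∑ m : 𝒮, ∑ e : Bool,
      (c e m x * ∫ ω in A e m x, Y ω ∂μ + d e m x * (μ (A e m x)).toReal))]
  have hzero : ∑ x ∈ Finset.univ.filter (fun x => ¬ μ (X ⁻¹' {x}) ≠ 0),
      (∑ m : 𝒮, ∑ e : Bool,
        (c e m x * ∫ ω in A e m x, Y ω ∂μ + d e m x * (μ (A e m x)).toReal)) = 0 := by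
    refine Finset.sum_eq_zero fun x hx => ?_
    rw [Finset.mem_filter] at hx
    have hx0 : μ (X ⁻¹' {x}) = 0 := not_not.mp hx.2
    refine Finset.sum_eq_zero fun m _ => Finset.sum_eq_zero fun e _ => ?_
    have hAx : μ (A e m x) = 0 :=
      measure_mono_null (by rw [hA]; exact Set.inter_subset_right) hx0
    rw [Measure.restrict_eq_zero.mpr hAx, integral_zero_measure, hAx]
    simp
  rw [hzero, add_zero]
  refine Finset.sum_congr rfl fun x hx => ?_
  rw [Finset.mem_filter] at hx
  have hx' : μ (X ⁻¹' {x}) ≠ 0 := hx.2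
  -- per-x notation
  have hfin : ∀ s : Set Ω, μ s ≠ ⊤ := fun s => measure_ne_top μ s
  set px := (μ (X ⁻¹' {x})).toReal with hpx_def
  set pe : Bool → ℝ := fun e => (μ (E ⁻¹' {e} ∩ X ⁻¹' {x})).toReal with hpe_def
  set pm : Bool → 𝒮 → ℝ := fun e m => (μ (A e m x)).toReal with hpm_def
  have hpx : 0 < px := ENNReal.toReal_pos hx' (hfin _)
  have hpe : ∀ e, 0 < pe e := fun e => ENNReal.toReal_pos (hposE e x hx') (hfin _)
  have hAeq : ∀ e m, M ⁻¹' {m} ∩ E ⁻¹' {e} ∩ X ⁻¹' {x} = A e m x := by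
    intro e m
    rw [hA]
    ext ω
    simp only [Set.mem_inter_iff, Set.mem_preimage, Set.mem_singleton_iff]
    tauto
  have hpm : ∀ e m, 0 < pm e m := fun e m =>
    ENNReal.toReal_pos (hAeq e m ▸ hposM m e x hx') (hfin _)
  -- partition sums
  have hpesum : pe true + pe false = px := by
    have hU : (E ⁻¹' {true} ∩ X ⁻¹' {x}) ∪ (E ⁻¹' {false} ∩ X ⁻¹' {x}) = X ⁻¹' {x} := by
      ext ω
      by_cases h : E ω <;> simp [h]
    have hdisj : Disjoint (E ⁻¹' {true} ∩ X ⁻¹' {x}) (E ⁻¹' {false} ∩ X ⁻¹' {x}) := by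
      rw [Set.disjoint_left]
      rintro ω ⟨h1, -⟩ ⟨h2, -⟩
      simp only [Set.mem_preimage, Set.mem_singleton_iff] at h1 h2
      rw [h1] at h2
      exact Bool.noConfusion h2
    have hmeq : μ (X ⁻¹' {x}) =
        μ (E ⁻¹' {true} ∩ X ⁻¹' {x}) + μ (E ⁻¹' {false} ∩ X ⁻¹' {x}) := by
      have h := measure_union (μ := μ) hdisj ((hE (measurableSet_singleton false)).inter
        (hX (measurableSet_singleton x)))
      rw [hU] at h
      exact h
    simp only [hpe_def, hpx_def]
    rw [hmeq, ENNReal.toReal_add (hfin _) (hfin _)]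
  have hpmsum : ∀ e, ∑ m : 𝒮, pm e m = pe e := by
    intro e
    have hU : (⋃ m ∈ (Finset.univ : Finset 𝒮), A e m x) = E ⁻¹' {e} ∩ X ⁻¹' {x} := by
      rw [hA]
      ext ω
      simp only [Set.mem_iUnion, Set.mem_inter_iff, Set.mem_preimage, Set.mem_singleton_iff,
        Finset.mem_univ, exists_prop, true_and]
      constructor
      · rintro ⟨m, ⟨⟨he, -⟩, hxx⟩⟩; exact ⟨he, hxx⟩
      · rintro ⟨he, hxx⟩; exact ⟨M ω, ⟨⟨he, rfl⟩, hxx⟩⟩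
    have hdisj : Set.PairwiseDisjoint (↑(Finset.univ : Finset 𝒮)) (fun m => A e m x) := by
      intro m1 _ m2 _ hne
      simp only [Function.onFun]
      rw [Set.disjoint_left]
      rintro ω hω1 hω2
      rw [hA] at hω1 hω2
      exact hne (hω1.1.2.symm.trans hω2.1.2)
    have hmeq : μ (E ⁻¹' {e} ∩ X ⁻¹' {x}) = ∑ m : 𝒮, μ (A e m x) := by
      rw [← hU]
      exact measure_biUnion_finset hdisj (fun m _ => hAmeas e m x)
    simp only [hpm_def, hpe_def]
    rw [hmeq, ENNReal.toReal_sum (fun m _ => hfin _)]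
  -- model rewrites
  have hMinter : ∀ e m, M ⁻¹' {m} ∩ (E ⁻¹' {e} ∩ X ⁻¹' {x}) = A e m x := by
    intro e m
    rw [← hAeq e m, Set.inter_assoc]
  have hfEx : fEhat x = pe true / px := by
    rw [hfE x hx', cP]
  have hfMx : ∀ m e, fMhat m e x = pm e m / pe e := by
    intro m e
    rw [hfM m e x hx', cP, hMinter e m]
  have hone : 1 - fEhat x = pe false / px := by
    rw [hfEx]
    field_simp
    linarith [hpesum]
  -- main algebra
  have key : ∀ m : 𝒮,
      ((c true m x * ∫ ω in A true m x, Y ω ∂μ + d true m x * pm true m)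
        + (c false m x * ∫ ω in A false m x, Y ω ∂μ + d false m x * pm false m))
      = ((∫ ω in A true m x, Y ω ∂μ) / pm true m * (pm false m / pe false) * px
          + (etahat x * (pm true m + pm false m) - etahat x * px * pm false m / pe false)) := by
    intro m
    simp only [hc, hd, if_true, if_false, Bool.false_eq_true, ite_true, ite_false]
    rw [hfMx m false, hfMx m true, hone, hfEx]
    have h1 := hpx.ne'
    have h2 := (hpe true).ne'
    have h3 := (hpe false).ne'
    have h4 := (hpm true m).ne'
    field_simp
    ring
  calc (∑ m : 𝒮, ∑ e : Bool,
        (c e m x * ∫ ω in A e m x, Y ω ∂μ + d e m x * (μ (A e m x)).toReal))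
      = ∑ m : 𝒮, ((∫ ω in A true m x, Y ω ∂μ) / pm true m * (pm false m / pe false) * px
          + (etahat x * (pm true m + pm false m) - etahat x * px * pm false m / pe false)) := by
        refine Finset.sum_congr rfl fun m _ => ?_
        rw [Fintype.sum_bool]
        exact key m
    _ = ∑ m : 𝒮, (∫ ω in A true m x, Y ω ∂μ) / pm true m * (pm false m / pe false) * px
          + ∑ m : 𝒮, (etahat x * (pm true m + pm false m)
            - etahat x * px * pm false m / pe false) := Finset.sum_add_distrib
    _ = ∑ m : 𝒮, (∫ ω in A true m x, Y ω ∂μ) / pm true m * (pm false m / pe false) * px := by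
        have hB : ∑ m : 𝒮, (etahat x * (pm true m + pm false m)
            - etahat x * px * pm false m / pe false) = 0 := by
          rw [Finset.sum_sub_distrib]
          have h1 : ∑ m : 𝒮, etahat x * (pm true m + pm false m)
              = etahat x * (pe true + pe false) := by
            rw [← Finset.mul_sum, Finset.sum_add_distrib, hpmsum true, hpmsum false]
          have h2 : ∑ m : 𝒮, etahat x * px * pm false m / pe false = etahat x * px := by
            have : ∀ m : 𝒮, etahat x * px * pm false m / pe false
                = etahat x * px / pe false * pm false m := fun m => by ring
            rw [Finset.sum_congr rfl fun m _ => this m, ← Finset.mul_sum, hpmsum false]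
            exact div_mul_cancel₀ _ (hpe false).ne'
          rw [h1, h2, hpesum]
          ring
        rw [hB, add_zero]
    _ = ∑ m : 𝒮, cE μ Y (E ⁻¹' {true} ∩ M ⁻¹' {m} ∩ X ⁻¹' {x}) *
          cP μ (M ⁻¹' {m}) (E ⁻¹' {false} ∩ X ⁻¹' {x}) * (μ (X ⁻¹' {x})).toReal := by
        refine Finset.sum_congr rfl fun m _ => ?_
        rw [cE, cP, hMinter false m]
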